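/- Let d be a prime, let t ≥ 1, let x_1, …, x_t be pairwise distinct nonzero elements of ZMod d, let f be a polynomial over ZMod d of degree at most t − 1, and let s_r = f(x_r) · ∏_{j ≠ r} x_j · (x_j − x_r)⁻¹ ∈ ZMod d be the shadows. Let S = ∑_{r=1}^{t} s_r ∈ ZMod d and consider the state ψ : ZMod d → ℂ with ψ(k) = (1/√d) e^{2πi S k / d}. Then the inverse quantum Fourier transform of ψ, defined by (QFT⁻¹ ψ)(l) = (1/√d) ∑_{k ∈ ZMod d} e^{-2πi k l / d} ψ(k), equals the indicator function of f(0): it takes value 1 at l = f(0) and 0 at every other l ∈ ZMod d. -/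
import Mathlib

open Polynomial Finset Complex Real

lemma zmod_sum_val {d : ℕ} [NeZero d] (g : ℕ → ℂ) :
    ∑ k : ZMod d, g k.val = ∑ i ∈ Finset.range d, g i := by
  refine Finset.sum_nbij' (fun k => k.val) (fun i => (i : ZMod d)) ?_ ?_ ?_ ?_ ?_
  · intro k _; exact Finset.mem_range.mpr (ZMod.val_lt k)
  · intro i _; exact Finset.mem_univ _
  · intro k _; exact ZMod.natCast_zmod_val k
  · intro i hi; exact ZMod.val_cast_of_lt (Finset.mem_range.mp hi)
  · intro k _; rfl

lemma exp_orthogonality (d : ℕ) [NeZero d] (hd : d ≠ 0) (a b : ZMod d) :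
    ∑ k : ZMod d,
      Complex.exp (-(2 * π * I * (k.val : ℂ) * (b.val : ℂ) / d)) *
        Complex.exp (2 * π * I * (a.val : ℂ) * (k.val : ℂ) / d) =
      if b = a then (d : ℂ) else 0 := by
  set ζ : ℂ := Complex.exp (2 * π * I / d) with hζdef
  have hζ : IsPrimitiveRoot ζ d := Complex.isPrimitiveRoot_exp d hd
  set m : ℤ := (a.val : ℤ) - (b.val : ℤ) with hm
  have hdC : (d : ℂ) ≠ 0 := Nat.cast_ne_zero.mpr hd
  have hterm : ∀ k : ZMod d,
      Complex.exp (-(2 * π * I * (k.val : ℂ) * (b.val : ℂ) / d)) *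
        Complex.exp (2 * π * I * (a.val : ℂ) * (k.val : ℂ) / d) = (ζ ^ m) ^ k.val := by
    intro k
    rw [← Complex.exp_add, hζdef, ← Complex.exp_int_mul, ← Complex.exp_nat_mul]
    have hmC : (m : ℂ) = (a.val : ℂ) - (b.val : ℂ) := by push_cast [hm]; ring
    congr 1
    rw [hmC]
    field_simp
    ring
  simp_rw [hterm]
  rw [zmod_sum_val (fun i => (ζ ^ m) ^ i)]
  by_cases hab : b = a
  · subst hab
    simp [hm]
  · rw [if_neg hab]
    have hm0 : m ≠ 0 := by
      simp only [hm, sub_ne_zero]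
      have : a.val ≠ b.val := fun h => hab ((ZMod.val_injective d h).symm)
      exact_mod_cast this
    have hnd : ¬ (d : ℤ) ∣ m := by
      intro hdvd
      have h1 : m.natAbs < d := by
        have := ZMod.val_lt a; have := ZMod.val_lt b
        omega
      have h2 : (d : ℤ) ∣ m.natAbs := (Int.dvd_natAbs).mpr hdvd
      have := Int.le_of_dvd (by omega) h2
      omega
    have hne1 : ζ ^ m ≠ 1 := fun h => hnd ((hζ.zpow_eq_one_iff_dvd m).mp h)
    rw [geom_sum_eq hne1]
    have : (ζ ^ m) ^ d = 1 := by
      rw [← zpow_natCast (ζ ^ m), ← zpow_mul, mul_comm, zpow_mul, zpow_natCast,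
        hζ.pow_eq_one, one_zpow]
    rw [this, sub_self, zero_div]

/-- Lemma 1 of the paper (correctness of Step 9): applying the inverse quantum
Fourier transform to the accumulated state `ψ k = (1/√d) e^{2πi S k / d}`,
where `S` is the sum of the shadows, yields the basis state `|f(0)⟩`
(the indicator function of the secret `f(0)`). -/
theorem QFTinv_recovers_secret (d : ℕ) [Fact d.Prime] (t : ℕ) (ht : 1 ≤ t)
    (x : Fin t → ZMod d) (hx : Function.Injective x) (hx0 : ∀ r, x r ≠ 0)
    (f : Polynomial (ZMod d)) (hf : f.natDegree ≤ t - 1)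
    (s : Fin t → ZMod d)
    (hs : ∀ r, s r = f.eval (x r) * ∏ j ∈ Finset.univ.erase r, x j * (x j - x r)⁻¹)
    (S : ZMod d) (hS : S = ∑ r : Fin t, s r)
    (ψ : ZMod d → ℂ)
    (hψ : ∀ k, ψ k = (1 / Real.sqrt d : ℂ) *
      Complex.exp (2 * π * I * (S.val : ℂ) * (k.val : ℂ) / d)) :
    (fun l => (1 / Real.sqrt d : ℂ) *
        ∑ k : ZMod d,
          Complex.exp (-(2 * π * I * (k.val : ℂ) * (l.val : ℂ) / d)) * ψ k) =
      fun l => if l = f.eval 0 then (1 : ℂ) else 0 := by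
  have hp : d.Prime := Fact.out
  have hd : d ≠ 0 := hp.ne_zero
  haveI : NeZero d := ⟨hd⟩
  -- Step 1: S = f.eval 0 (Lagrange interpolation at 0)
  have hinj : Set.InjOn x (Finset.univ : Finset (Fin t)) := fun a _ b _ h => hx h
  have hdeg : f.degree < ((Finset.univ : Finset (Fin t)).card : WithBot ℕ) := by
    rw [Finset.card_univ, Fintype.card_fin]
    calc f.degree ≤ (f.natDegree : WithBot ℕ) := Polynomial.degree_le_natDegree
      _ < (t : WithBot ℕ) := by exact_mod_cast Nat.lt_of_le_of_lt hf (by omega)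
  have hSf : S = f.eval 0 := by
    conv_rhs => rw [Lagrange.eq_interpolate hinj hdeg]
    rw [hS, Lagrange.interpolate_apply, Polynomial.eval_finset_sum]
    refine Finset.sum_congr rfl fun r _ => ?_
    rw [hs r, Polynomial.eval_mul, Polynomial.eval_C, Lagrange.basis,
      Polynomial.eval_prod]
    congr 1
    refine Finset.prod_congr rfl fun j hj => ?_
    rw [Lagrange.basisDivisor, Polynomial.eval_mul, Polynomial.eval_C,
      Polynomial.eval_sub, Polynomial.eval_X, Polynomial.eval_C]
    have : x j - x r = -(x r - x j) := by ring
    rw [this, inv_neg]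
    ring
  -- Step 2: orthogonality
  funext l
  simp_rw [hψ, mul_left_comm _ ((1 / Real.sqrt d : ℂ)), ← Finset.mul_sum,
    exp_orthogonality d hd S l]
  rw [← hSf]
  by_cases hl : l = S
  · rw [if_pos hl, if_pos hl]
    have hsq : (Real.sqrt d : ℂ) * Real.sqrt d = (d : ℂ) := by
      norm_cast
      exact Real.mul_self_sqrt (Nat.cast_nonneg d)
    have hs0 : (Real.sqrt d : ℂ) ≠ 0 := by
      simp only [ne_eq, Complex.ofReal_eq_zero]
      positivity
    rw [show (1 / (Real.sqrt d : ℂ)) * ((1 / (Real.sqrt d : ℂ)) * (d : ℂ)) =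
      (d : ℂ) / ((Real.sqrt d : ℂ) * (Real.sqrt d : ℂ)) by ring, hsq,
      div_self (Nat.cast_ne_zero.mpr hd)]
  · rw [if_neg hl, if_neg hl, mul_zero, mul_zero]
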